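/- Let ω : ℝ≥0 → ℝ≥0 be continuous, strictly increasing, concave, with ω(0) = 0, and let m ≥ 1 be an integer. Let ψ denote the inverse function of s ↦ s^m ω(s) (defined on the range of that function), and define φ := ω ∘ ψ. Then φ is concave on its domain. -/
import Mathlib

open Set

/-- Key inequality: if `u^m ω u` is the convex combination of `s^m ω s` and `r^m ω r`
with `s ≤ r`, then `ω u` dominates the corresponding combination of `ω s` and `ω r`. -/
lemma phi_concave_key (ω : ℝ → ℝ) (m : ℕ)
    (hnn : ∀ t, 0 ≤ t → 0 ≤ ω t)
    (hcont : ContinuousOn ω (Set.Ici 0))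
    (hmono : StrictMonoOn ω (Set.Ici 0))
    (hconc : ConcaveOn ℝ (Set.Ici 0) ω)
    (a b s r u : ℝ) (ha : 0 ≤ a) (hb : 0 ≤ b) (hab : a + b = 1)
    (hs : 0 ≤ s) (hsr : s ≤ r) (hu : 0 ≤ u)
    (hgu : u ^ m * ω u = a * (s ^ m * ω s) + b * (r ^ m * ω r)) :
    a * ω s + b * ω r ≤ ω u := by
  have hr : 0 ≤ r := hs.trans hsr
  have hws : ω s ≤ ω r := hmono.monotoneOn hs hr hsr
  obtain rfl : a = 1 - b := by linarith
  have hb1 : b ≤ 1 := by linarith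
  have hc1 : ω s ≤ (1 - b) * ω s + b * ω r := by nlinarith
  have hc2 : (1 - b) * ω s + b * ω r ≤ ω r := by nlinarith
  have hccI : ContinuousOn ω (Icc s r) :=
    hcont.mono (Icc_subset_Ici_self.trans (Ici_subset_Ici.2 hs))
  obtain ⟨v, hvI, hωv⟩ := intermediate_value_Icc hsr hccI ⟨hc1, hc2⟩
  have hv0 : 0 ≤ v := hs.trans hvI.1
  have hmem : (1 - b) * s + b * r ∈ Ici (0:ℝ) := by
    have : 0 ≤ (1 - b) * s + b * r := by nlinarith
    simpa using this
  have hconc' := hconc.2 (mem_Ici.2 hs) (mem_Ici.2 hr) ha hb hab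
  simp only [smul_eq_mul] at hconc'
  have hωle : ω v ≤ ω ((1 - b) * s + b * r) := by rw [hωv]; exact hconc'
  have hvle : v ≤ (1 - b) * s + b * r := (hmono.le_iff_le (mem_Ici.2 hv0) hmem).1 hωle
  have hpow1 : v ^ m ≤ ((1 - b) * s + b * r) ^ m := pow_le_pow_left₀ hv0 hvle m
  have hpow2 : ((1 - b) * s + b * r) ^ m ≤ (1 - b) * s ^ m + b * r ^ m := by
    have := (convexOn_pow (𝕜 := ℝ) m).2 (mem_Ici.2 hs) (mem_Ici.2 hr) ha hb hab
    simpa using this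
  have hpowsr : s ^ m ≤ r ^ m := pow_le_pow_left₀ hs hsr m
  have hsnn : 0 ≤ ω s := hnn s hs
  have hc0 : 0 ≤ (1 - b) * ω s + b * ω r := by nlinarith
  have hkey : v ^ m * ω v ≤ u ^ m * ω u := by
    rw [hωv, hgu]
    have h1 : v ^ m * ((1 - b) * ω s + b * ω r)
        ≤ ((1 - b) * s ^ m + b * r ^ m) * ((1 - b) * ω s + b * ω r) :=
      mul_le_mul_of_nonneg_right (hpow1.trans hpow2) hc0
    have hcheb : 0 ≤ (r ^ m - s ^ m) * (ω r - ω s) :=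
      mul_nonneg (by linarith) (by linarith)
    nlinarith [mul_nonneg (mul_nonneg ha hb) hcheb]
  have hgmono : StrictMonoOn (fun s : ℝ => s ^ m * ω s) (Ici 0) := by
    intro x hx y hy hxy
    have hx0 : (0:ℝ) ≤ x := hx
    have hy0 : (0:ℝ) < y := lt_of_le_of_lt hx0 hxy
    have h1 : x ^ m * ω x ≤ y ^ m * ω x :=
      mul_le_mul_of_nonneg_right (pow_le_pow_left₀ hx0 hxy.le m) (hnn x hx0)
    have h2 : y ^ m * ω x < y ^ m * ω y :=
      mul_lt_mul_of_pos_left (hmono hx hy hxy) (pow_pos hy0 m)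
    exact lt_of_le_of_lt h1 h2
  have hvu : v ≤ u := (hgmono.le_iff_le (mem_Ici.2 hv0) (mem_Ici.2 hu)).1 hkey
  calc (1 - b) * ω s + b * ω r = ω v := hωv.symm
    _ ≤ ω u := hmono.monotoneOn (mem_Ici.2 hv0) (mem_Ici.2 hu) hvu

/-- Let `ω : [0,∞) → [0,∞)` be continuous, strictly increasing, concave,
`ω 0 = 0`, `m ≥ 1`. If `ψ` is the inverse of `s ↦ s^m * ω s` (on the range of that
function), then `φ := ω ∘ ψ` is concave on its domain, i.e. on the range. -/
theorem phi_concave (ω : ℝ → ℝ) (m : ℕ) (hm : 1 ≤ m)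
    (hnn : ∀ t, 0 ≤ t → 0 ≤ ω t)
    (hcont : ContinuousOn ω (Set.Ici 0))
    (hmono : StrictMonoOn ω (Set.Ici 0))
    (hconc : ConcaveOn ℝ (Set.Ici 0) ω)
    (h0 : ω 0 = 0)
    (ψ : ℝ → ℝ)
    (hψ : ∀ s : ℝ, 0 ≤ s → ψ (s ^ m * ω s) = s) :
    ConcaveOn ℝ ((fun s : ℝ => s ^ m * ω s) '' Set.Ici 0) (fun t => ω (ψ t)) := by
  set g : ℝ → ℝ := fun s : ℝ => s ^ m * ω s with hg
  have hgcont : ContinuousOn g (Ici 0) := ((continuous_pow m).continuousOn).mul hcont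
  have hconvS : Convex ℝ (g '' Ici 0) :=
    ((isPreconnected_Ici.image g hgcont).ordConnected).convex
  refine ⟨hconvS, ?_⟩
  rintro x ⟨s, hs, rfl⟩ y ⟨r, hr, rfl⟩ a b ha hb hab
  have hs : (0:ℝ) ≤ s := hs
  have hr : (0:ℝ) ≤ r := hr
  obtain ⟨u, hu, hgu⟩ := hconvS ⟨s, hs, rfl⟩ ⟨r, hr, rfl⟩ ha hb hab
  have hu : (0:ℝ) ≤ u := hu
  simp only [smul_eq_mul] at hgu ⊢
  have hψs : ψ (g s) = s := hψ s hs
  have hψr : ψ (g r) = r := hψ r hr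
  have hψu : ψ (a * g s + b * g r) = u := by rw [← hgu]; exact hψ u hu
  rw [hψu]
  have hgu' : u ^ m * ω u = a * (s ^ m * ω s) + b * (r ^ m * ω r) := by
    have := hgu.symm; simp only [hg] at this; exact this.symm
  rcases le_total s r with hsr | hrs
  · have := phi_concave_key ω m hnn hcont hmono hconc a b s r u ha hb hab hs hsr hu hgu'
    rw [hψs, hψr]; linarith
  · have hgu'' : u ^ m * ω u = b * (r ^ m * ω r) + a * (s ^ m * ω s) := by linarith
    have := phi_concave_key ω m hnn hcont hmono hconc b a r s u hb ha (by linarith) hr hrs hu hgu''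
    rw [hψs, hψr]; linarith
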